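/- Let G be a bi-matrix game on n pure strategies with all payoff entries in [0,1], let M > 0, and let (x*, y*) be a Nash equilibrium of the diagonally modified game D^M(G) in which at least one of x*, y* is not fully mixed (i.e. has some coordinate equal to 0). Then for every pure strategy t with x*ₜ > 0 and y*ₜ > 0, we have min(x*ₜ, y*ₜ) < 1/M. -/
import Mathlib


open Finset

/-- The probability simplex over a finite strategy set `S`. -/
def simplex (S : Type*) [Fintype S] : Set (S → ℝ) :=
  {x | (∀ i, 0 ≤ x i) ∧ ∑ i, x i = 1}

/-- Expected payoff `Σᵢⱼ xᵢ yⱼ A i j`. -/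
def payoff {S : Type*} [Fintype S] (A : S → S → ℝ) (x y : S → ℝ) : ℝ :=
  ∑ i, ∑ j, x i * y j * A i j

/-- The point mass at pure strategy `s`. -/
def pureStrat {S : Type*} [DecidableEq S] (s : S) : S → ℝ :=
  fun i => if i = s then 1 else 0

/-- Support of a mixed strategy. -/
def supp {S : Type*} (x : S → ℝ) : Set S := {i | 0 < x i}

/-- L1 distance between mixed strategies. -/
def dist1 {S : Type*} [Fintype S] (x y : S → ℝ) : ℝ := ∑ i, |x i - y i|

/-- `(x, y)` is an ε-Nash equilibrium of the bi-matrix game `(R, C)`. -/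
def IsEpsNash {S : Type*} [Fintype S] [DecidableEq S]
    (R C : S → S → ℝ) (x y : S → ℝ) (ε : ℝ) : Prop :=
  x ∈ simplex S ∧ y ∈ simplex S ∧
  (∀ s : S, payoff R (pureStrat s) y ≤ payoff R x y + ε) ∧
  (∀ s : S, payoff C x (pureStrat s) ≤ payoff C x y + ε)

/-- The diagonally modified payoff matrix: all diagonal entries replaced by `-M`. -/
def diagMod {n : ℕ} (A : Fin n → Fin n → ℝ) (M : ℝ) : Fin n → Fin n → ℝ :=
  fun i j => if i = j then -M else A i j

/-- On a Nash equilibrium, every strategy in the support attains the optimum. -/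
lemma supp_opt {n : ℕ} (z : Fin n → ℝ) (hz : z ∈ simplex (Fin n)) (g : Fin n → ℝ)
    (c : ℝ) (hle : ∀ k, g k ≤ c) (hs : ∑ k, z k * g k = c)
    (t : Fin n) (ht : 0 < z t) : g t = c := by
  obtain ⟨hz0, hz1⟩ := hz
  have hzero : ∑ k, z k * (c - g k) = 0 := by
    rw [show (0:ℝ) = c * 1 - c by ring, ← hz1, ← hs, Finset.mul_sum,
      ← Finset.sum_sub_distrib]
    exact Finset.sum_congr rfl (fun k _ => by ring)
  have hnn : ∀ k ∈ Finset.univ, 0 ≤ z k * (c - g k) :=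
    fun k _ => mul_nonneg (hz0 k) (by linarith [hle k])
  have := (Finset.sum_eq_zero_iff_of_nonneg hnn).mp hzero t (Finset.mem_univ t)
  have := mul_eq_zero.mp this
  rcases this with h | h
  · exact absurd h (ne_of_gt ht)
  · linarith

/-- Core estimate for one side of the game. -/
lemma aux_side {n : ℕ} (B : Fin n → Fin n → ℝ) (M : ℝ) (hM : 0 < M)
    (hoff : ∀ j k, j ≠ k → 0 ≤ B j k ∧ B j k ≤ 1) (hdiag : ∀ k, B k k = -M)
    (w z : Fin n → ℝ) (hw : w ∈ simplex (Fin n)) (hz : z ∈ simplex (Fin n))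
    (i : Fin n) (hi : w i = 0)
    (c : ℝ) (hle : ∀ k, (∑ j, w j * B j k) ≤ c)
    (hsum : ∑ k, z k * (∑ j, w j * B j k) = c)
    (t : Fin n) (hzt : 0 < z t) (hwt : 0 < w t) : w t < 1 / M := by
  obtain ⟨hw0, hw1⟩ := hw
  -- the deviation to i is nonnegative
  have hgi : 0 ≤ ∑ j, w j * B j i := by
    apply Finset.sum_nonneg
    intro j _
    rcases eq_or_ne j i with rfl | hji
    · simp [hi]
    · exact mul_nonneg (hw0 j) (hoff j i hji).1
  have hc0 : 0 ≤ c := le_trans hgi (hle i)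
  have hgt : (∑ j, w j * B j t) = c :=
    supp_opt z hz _ c hle hsum t hzt
  -- upper bound on the payoff of t
  have hub : (∑ j, w j * B j t) ≤ (1 - w t) - M * w t := by
    have h1 : (∑ j, w j * B j t)
        = (∑ j ∈ Finset.univ.erase t, w j * B j t) + w t * B t t := by
      rw [Finset.sum_erase_add]
      exact Finset.mem_univ t
    rw [h1, hdiag t]
    have h2 : (∑ j ∈ Finset.univ.erase t, w j * B j t)
        ≤ ∑ j ∈ Finset.univ.erase t, w j := by
      apply Finset.sum_le_sum
      intro j hj
      have hjt : j ≠ t := Finset.ne_of_mem_erase hj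
      calc w j * B j t ≤ w j * 1 :=
            mul_le_mul_of_nonneg_left (hoff j t hjt).2 (hw0 j)
        _ = w j := mul_one _
    have h3 : (∑ j ∈ Finset.univ.erase t, w j) = 1 - w t := by
      have := Finset.sum_erase_add Finset.univ w (Finset.mem_univ t)
      linarith [this.trans hw1]
    nlinarith
  have hkey : 0 ≤ 1 - w t - M * w t := by
    rw [hgt] at hub; linarith
  have h4 : w t ≤ 1 / (1 + M) := by
    rw [div_eq_inv_mul, le_inv_mul_iff₀ (by linarith : (0:ℝ) < 1 + M)]
    nlinarith
  have h5 : 1 / (1 + M) < 1 / M := by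
    apply div_lt_div_of_pos_left one_pos hM
    linarith
  linarith

lemma payoff_pure_right {n : ℕ} (A : Fin n → Fin n → ℝ) (x : Fin n → ℝ) (k : Fin n) :
    payoff A x (pureStrat k) = ∑ j, x j * A j k := by
  unfold payoff pureStrat
  apply Finset.sum_congr rfl
  intro i _
  rw [Finset.sum_eq_single k]
  · simp
  · intro b _ hb; simp [hb]
  · simp

lemma payoff_pure_left {n : ℕ} (A : Fin n → Fin n → ℝ) (y : Fin n → ℝ) (s : Fin n) :
    payoff A (pureStrat s) y = ∑ j, y j * A s j := by
  unfold payoff pureStrat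
  rw [Finset.sum_eq_single s]
  · apply Finset.sum_congr rfl; intro j _; simp
  · intro b _ hb
    apply Finset.sum_eq_zero; intro j _; simp [hb]
  · simp

lemma payoff_expand_right {n : ℕ} (A : Fin n → Fin n → ℝ) (x y : Fin n → ℝ) :
    payoff A x y = ∑ k, y k * (∑ j, x j * A j k) := by
  unfold payoff
  rw [Finset.sum_comm]
  apply Finset.sum_congr rfl
  intro k _
  rw [Finset.mul_sum]
  apply Finset.sum_congr rfl
  intro j _
  ring

lemma payoff_expand_left {n : ℕ} (A : Fin n → Fin n → ℝ) (x y : Fin n → ℝ) :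
    payoff A x y = ∑ s, x s * (∑ j, y j * A s j) := by
  unfold payoff
  apply Finset.sum_congr rfl
  intro s _
  rw [Finset.mul_sum]
  apply Finset.sum_congr rfl
  intro j _
  ring

theorem stmt7 {n : ℕ} (R C : Fin n → Fin n → ℝ)
    (hR : ∀ i j, R i j ∈ Set.Icc (0 : ℝ) 1) (hC : ∀ i j, C i j ∈ Set.Icc (0 : ℝ) 1)
    (M : ℝ) (hM : 0 < M) (x y : Fin n → ℝ)
    (hNash : IsEpsNash (diagMod R M) (diagMod C M) x y 0)
    (hnotfull : (∃ i, x i = 0) ∨ (∃ i, y i = 0)) :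
    ∀ t, 0 < x t → 0 < y t → min (x t) (y t) < 1 / M := by
  obtain ⟨hx, hy, hrow, hcol⟩ := hNash
  intro t hxt hyt
  rcases hnotfull with ⟨i, hi⟩ | ⟨i, hi⟩
  · -- some x i = 0 : use the column player
    have hxtlt : x t < 1 / M := by
      apply aux_side (fun j k => diagMod C M j k) M hM
        (fun j k hjk => by
          simpa [diagMod, hjk] using ⟨(hC j k).1, (hC j k).2⟩)
        (fun k => by simp [diagMod]) x y hx hy i hi (payoff (diagMod C M) x y)
        (fun k => by simpa [payoff_pure_right] using hcol k)
        (by rw [← payoff_expand_right]) t hyt hxt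
    exact lt_of_le_of_lt (min_le_left _ _) hxtlt
  · -- some y i = 0 : use the row player
    have hytlt : y t < 1 / M := by
      apply aux_side (fun j k => diagMod R M k j) M hM
        (fun j k hjk => by
          simpa [diagMod, hjk.symm] using ⟨(hR k j).1, (hR k j).2⟩)
        (fun k => by simp [diagMod]) y x hy hx i hi (payoff (diagMod R M) x y)
        (fun k => by simpa [payoff_pure_left] using hrow k)
        (by rw [← payoff_expand_left]) t hxt hyt
    exact lt_of_le_of_lt (min_le_right _ _) hytlt
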